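/- Let G = (V,E) be a directed mixed graph, let α, β ∈ V and C ⊆ V. If ω is a μ-connecting walk from α to β given C in G, then there exists a μ-connecting route from α to β given C consisting of edges occurring in ω, where a route from α to β is a walk from α to β such that no node different from β occurs more than once and β occurs at most twice. -/

import Mathlib

/-!
Directed mixed graphs (DMGs) with μ-separation, following
Mogensen & Hansen, "Markov equivalence of marginalized local independence graphs".
-/

universe u

/-- A directed mixed graph on node set `V`: a set of directed edges (`dir a b`
meaning `a → b`) and a set of bidirected edges (`bi`, a symmetric relation since
bidirected edges are unordered pairs).  Loops are allowed. -/
structure DMG (V : Type u) where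
  dir : V → V → Prop
  bi : V → V → Prop
  bi_symm : ∀ a b, bi a b → bi b a

namespace DMG

variable {V : Type u}

/-- A single step of a walk: an edge instance together with the direction in
which it is traversed (this records, in particular, orientations of loops).
A directed edge has a tail at its source and a head at its target; a bidirected
edge has heads at both endpoints. -/
inductive Step (G : DMG V) : V → V → Type u
  | dirF : ∀ {a b : V}, G.dir a b → Step G a b
  | dirB : ∀ {a b : V}, G.dir b a → Step G a b
  | bid  : ∀ {a b : V}, G.bi a b → Step G a b

/-- Whether the step has a head (edge mark) at its start node. -/
def Step.headStart {G : DMG V} : ∀ {a b : V}, Step G a b → Bool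
  | _, _, .dirF _ => false
  | _, _, .dirB _ => true
  | _, _, .bid _ => true

/-- Whether the step has a head (edge mark) at its end node. -/
def Step.headEnd {G : DMG V} : ∀ {a b : V}, Step G a b → Bool
  | _, _, .dirF _ => true
  | _, _, .dirB _ => false
  | _, _, .bid _ => true

/-- The step traverses a bidirected edge. -/
def Step.IsBid {G : DMG V} {a b : V} : Step G a b → Prop
  | .bid _ => True
  | _ => False

/-- The step traverses a directed edge, forwards. -/
def Step.IsDirF {G : DMG V} {a b : V} : Step G a b → Prop
  | .dirF _ => True
  | _ => False

/-- The underlying edge of a step: a directed edge is the ordered pair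
(tail, head); a bidirected edge is the unordered pair of its endpoints. -/
def Step.edge {G : DMG V} : ∀ {a b : V}, Step G a b → (V × V) ⊕ (Sym2 V)
  | a, b, .dirF _ => Sum.inl (a, b)
  | a, b, .dirB _ => Sum.inl (b, a)
  | a, b, .bid _ => Sum.inr s(a, b)

/-- A walk in a DMG: an alternating sequence of nodes and edges, each edge
between its neighbouring nodes, with a chosen orientation of each edge
(in particular of each directed loop). -/
inductive Walk (G : DMG V) : V → V → Type u
  | nil (a : V) : Walk G a a
  | cons {a b c : V} (s : Step G a b) (w : Walk G b c) : Walk G a c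

namespace Walk

variable {G : DMG V}

/-- A nontrivial walk contains at least one edge. -/
def Nontrivial : ∀ {a b : V}, Walk G a b → Prop
  | _, _, .nil _ => False
  | _, _, .cons _ _ => True

/-- The list of nodes of a walk, in order (with multiplicity). -/
def nodes : ∀ {a b : V}, Walk G a b → List V
  | a, _, .nil _ => [a]
  | a, _, .cons _ w => a :: w.nodes

/-- The non-endpoint (internal) nodes of a walk, in order (with multiplicity). -/
def interior {a b : V} (w : Walk G a b) : List V :=
  (w.nodes.dropLast).drop 1

/-- The list of edges of a walk. -/
def edges : ∀ {a b : V}, Walk G a b → List ((V × V) ⊕ (Sym2 V))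
  | _, _, .nil _ => []
  | _, _, .cons s w => s.edge :: w.edges

/-- Whether the first edge of the walk has a head at the first node
(`false` for a trivial walk). -/
def firstHead : ∀ {a b : V}, Walk G a b → Bool
  | _, _, .nil _ => false
  | _, _, .cons s _ => s.headStart

/-- Whether the last edge of the walk has a head at the last node
(`false` for a trivial walk). -/
def lastHead : ∀ {a b : V}, Walk G a b → Bool
  | _, _, .nil _ => false
  | _, _, .cons s (.nil _) => s.headEnd
  | _, _, .cons _ (.cons t w) => lastHead (Walk.cons t w)

/-- Helper: conditions at all remaining internal node instances of a walk,
where `h` records whether the edge arriving at the current start node has a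
head there.  A node instance is a collider if both adjoining edges have a
head at it; a collider must lie in `Anc`, a noncollider must avoid `C`. -/
def openFrom (C Anc : Set V) : ∀ {a b : V}, Bool → Walk G a b → Prop
  | _, _, _, .nil _ => True
  | a, _, h, .cons s w =>
      (if h && s.headStart then a ∈ Anc else a ∉ C) ∧ openFrom C Anc s.headEnd w

/-- Helper: every remaining internal node instance which is a collider lies in `S`. -/
def collInFrom (S : Set V) : ∀ {a b : V}, Bool → Walk G a b → Prop
  | _, _, _, .nil _ => True
  | a, _, h, .cons s w =>
      ((h && s.headStart) = true → a ∈ S) ∧ collInFrom S s.headEnd w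

/-- Every collider (internal node instance with heads on both sides) of the
walk lies in `S`. -/
def CollidersIn (S : Set V) : ∀ {a b : V}, Walk G a b → Prop
  | _, _, .nil _ => True
  | _, _, .cons s w => collInFrom S s.headEnd w

/-- The walk has no colliders. -/
def NoColliders {a b : V} (w : Walk G a b) : Prop :=
  w.CollidersIn ∅

/-- Helper: every remaining internal node instance is a collider. -/
def allCollFrom : ∀ {a b : V}, Bool → Walk G a b → Prop
  | _, _, _, .nil _ => True
  | _, _, h, .cons s w => (h && s.headStart) = true ∧ allCollFrom s.headEnd w

/-- Every internal node instance of the walk is a collider (no noncolliders). -/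
def AllColliders : ∀ {a b : V}, Walk G a b → Prop
  | _, _, .nil _ => True
  | _, _, .cons s w => allCollFrom s.headEnd w

/-- Every edge of the walk is bidirected. -/
def AllBid : ∀ {a b : V}, Walk G a b → Prop
  | _, _, .nil _ => True
  | _, _, .cons s w => s.IsBid ∧ w.AllBid

/-- The walk consists of a directed first edge (pointing forwards) followed by
bidirected edges only (the form `α → β` or `α → γ₁ ↔ ⋯ ↔ γₙ ↔ β`). -/
def UniForm : ∀ {a b : V}, Walk G a b → Prop
  | _, _, .nil _ => False
  | _, _, .cons s w => s.IsDirF ∧ w.AllBid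

end Walk

/-- `a` is an ancestor of `b`: there is a (possibly trivial) directed path
from `a` to `b`. -/
def anc (G : DMG V) (a b : V) : Prop := Relation.ReflTransGen G.dir a b

/-- The set of ancestors of nodes of `C`. -/
def anSet (G : DMG V) (C : Set V) : Set V := {a | ∃ c ∈ C, G.anc a c}

/-- The walk is μ-connecting given `C`: it is nontrivial, its first node is not
in `C`, every collider lies in `An(C)`, no noncollider lies in `C`, and its
final edge has a head at the final node. -/
def Walk.MuConn {G : DMG V} (C : Set V) : ∀ {a b : V}, Walk G a b → Prop
  | _, _, .nil _ => False
  | a, _, .cons s w =>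
      a ∉ C ∧ Walk.openFrom C (G.anSet C) s.headEnd w ∧ (Walk.cons s w).lastHead = true

/-- `B` is μ-separated from `A` given `C` in `G`: there is no μ-connecting
walk from any node of `A` to any node of `B` given `C`. -/
def muSep (G : DMG V) (A B C : Set V) : Prop :=
  ∀ ⦃a b : V⦄, a ∈ A → b ∈ B → ∀ w : Walk G a b, ¬ w.MuConn C

/-- Two DMGs on the same node set are Markov equivalent: they induce the same
independence model via μ-separation, i.e. `I(G₁) = I(G₂)`. -/
def MarkovEq (G₁ G₂ : DMG V) : Prop :=
  ∀ A B C : Set V, muSep G₁ A B C ↔ muSep G₂ A B C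

/-- `b` is separable from `a` in `I(G)`: there is `C ⊆ V ∖ {a}` with
`⟨{a},{b} | C⟩ ∈ I(G)`. -/
def separable (G : DMG V) (a b : V) : Prop :=
  ∃ C : Set V, a ∉ C ∧ muSep G {a} {b} C

/-- `a ∈ u(b, I(G))`: `b` is inseparable from `a` in `I(G)`. -/
def inU (G : DMG V) (a b : V) : Prop := ¬ G.separable a b

/-- `G₁` is a subgraph of `G₂` (same node set, edge-set inclusion). -/
def Sub (G₁ G₂ : DMG V) : Prop :=
  (∀ a b, G₁.dir a b → G₂.dir a b) ∧ (∀ a b, G₁.bi a b → G₂.bi a b)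

/-- The DMG obtained by adding the directed edge `a → b`. -/
def addDir (G : DMG V) (a b : V) : DMG V where
  dir x y := G.dir x y ∨ (x = a ∧ y = b)
  bi := G.bi
  bi_symm := G.bi_symm

/-- The DMG obtained by adding the bidirected edge `a ↔ b`. -/
def addBi (G : DMG V) (a b : V) : DMG V where
  dir := G.dir
  bi x y := G.bi x y ∨ (x = a ∧ y = b) ∨ (x = b ∧ y = a)
  bi_symm x y h := by
    rcases h with h | h | h
    · exact Or.inl (G.bi_symm _ _ h)
    · exact Or.inr (Or.inr ⟨h.2, h.1⟩)
    · exact Or.inr (Or.inl ⟨h.2, h.1⟩)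

/-- The DMG obtained by removing the directed edge `a → b`. -/
def removeDir (G : DMG V) (a b : V) : DMG V where
  dir x y := G.dir x y ∧ ¬(x = a ∧ y = b)
  bi := G.bi
  bi_symm := G.bi_symm

/-- The DMG obtained by removing the bidirected edge `a ↔ b`. -/
def removeBi (G : DMG V) (a b : V) : DMG V where
  dir := G.dir
  bi x y := G.bi x y ∧ ¬((x = a ∧ y = b) ∨ (x = b ∧ y = a))
  bi_symm x y h := ⟨G.bi_symm _ _ h.1, fun hc => h.2 (by tauto)⟩

/-- The complete DMG: all directed and all bidirected edges present. -/
def IsComplete (G : DMG V) : Prop :=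
  (∀ a b, G.dir a b) ∧ (∀ a b, G.bi a b)

/-- A DMG is maximal if it is complete, or adding any (absent) edge changes the
induced independence model. -/
def IsMaximal (G : DMG V) : Prop :=
  G.IsComplete ∨
    ∀ a b : V, (¬ G.dir a b → ¬ MarkovEq (G.addDir a b) G) ∧
      (¬ G.bi a b → ¬ MarkovEq (G.addBi a b) G)

end DMG
namespace DMG

variable {V : Type u}

/-- An inducing path from `a` to `b`: a nontrivial path or cycle from `a` to
`b` with a head at `b`, with no noncolliders, and on which every node is an
ancestor of `a` or of `b`. -/
def IsInducingPath (G : DMG V) {a b : V} (w : Walk G a b) : Prop :=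
  w.Nontrivial ∧
  (w.nodes.Nodup ∨ (a = b ∧ w.nodes.dropLast.Nodup)) ∧
  w.lastHead = true ∧
  w.AllColliders ∧
  ∀ x ∈ w.nodes, G.anc x a ∨ G.anc x b

/-- A bidirected inducing path: an inducing path all of whose edges are bidirected. -/
def IsBidirectedIP (G : DMG V) {a b : V} (w : Walk G a b) : Prop :=
  G.IsInducingPath w ∧ w.AllBid

/-- A directed inducing path: an inducing path of the form `α → β` or
`α → γ₁ ↔ ⋯ ↔ γₙ ↔ β` with every `γᵢ` an ancestor of `β`. -/
def IsDirectedIP (G : DMG V) {a b : V} (w : Walk G a b) : Prop :=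
  G.IsInducingPath w ∧ w.UniForm ∧ ∀ x ∈ w.interior, G.anc x b

/-- There exists a nontrivial walk in `G` between `x` and `y` with no
colliders, all non-endpoint nodes in `M`, and with edge marks `hs` at `x`
(`true` = head) and `he` at `y`. -/
def ConnThrough (G : DMG V) (M : Set V) (x y : V) (hs he : Bool) : Prop :=
  ∃ w : Walk G x y, w.Nontrivial ∧ w.NoColliders ∧
    (∀ z ∈ w.interior, z ∈ M) ∧ w.firstHead = hs ∧ w.lastHead = he

/-- The latent projection `m(G, O)` of `G` on `O`: the DMG on node set `O`
having an edge (with given endpoint marks) between `α` and `β` if and only if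
`G` contains a nontrivial endpoint-identical walk between `α` and `β` with no
colliders and all non-endpoint nodes in `M = V ∖ O`. -/
def latentProj (G : DMG V) (O : Set V) : DMG {x : V // x ∈ O} where
  dir x y := ConnThrough G Oᶜ x.1 y.1 false true
  bi x y := ConnThrough G Oᶜ x.1 y.1 true true ∨ ConnThrough G Oᶜ y.1 x.1 true true
  bi_symm x y h := h.symm

/-- `x` is directedly collider-connected to `b`: there is a nontrivial walk
from `x` to `b` with a head at `b` on which every non-endpoint node is a
collider. -/
def dirCollConn (G : DMG V) (x b : V) : Prop :=
  ∃ w : Walk G x b, w.Nontrivial ∧ w.AllColliders ∧ w.lastHead = true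

/-- The set `D(a,b)` of nodes in `An({a,b})` directedly collider-connected to
`b`, except `a`. -/
def Dset (G : DMG V) (a b : V) : Set V :=
  {x | x ∈ G.anSet {a, b} ∧ G.dirCollConn x b} \ {a}

/-- `a` and `b` are potential siblings in the independence model `I(G)`. -/
def PotSib (G : DMG V) (a b : V) : Prop :=
  (G.inU b a ∧ G.inU a b) ∧
  (∀ (γ : V) (C : Set V), b ∈ C → muSep G {γ} {a} C → muSep G {γ} {b} C) ∧
  (∀ (γ : V) (C : Set V), a ∈ C → muSep G {γ} {b} C → muSep G {γ} {a} C)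

/-- `a` is a potential parent of `b` in the independence model `I(G)`. -/
def PotPar (G : DMG V) (a b : V) : Prop :=
  G.inU a b ∧
  (∀ (γ : V) (C : Set V), a ∉ C → muSep G {γ} {b} C → muSep G {γ} {a} C) ∧
  (∀ (γ δ : V) (C : Set V), a ∉ C → b ∈ C →
    muSep G {γ} {δ} C → muSep G {γ} {b} C ∨ muSep G {a} {δ} C) ∧
  (∀ (γ : V) (C : Set V), a ∉ C → muSep G {b} {γ} C → muSep G {b} {γ} (C ∪ {a}))

/-- The graph `N(I(G))`: directed edge `a → b` present iff `a` is a potential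
parent of `b` in `I(G)`, bidirected edge `a ↔ b` present iff `a` and `b` are
potential siblings in `I(G)` (potential siblinghood is symmetric). -/
def NGraph (G : DMG V) : DMG V where
  dir a b := G.PotPar a b
  bi a b := G.PotSib a b ∨ G.PotSib b a
  bi_symm _ _ h := h.symm

/-- A path is m-connecting given `C` if it is a path (no repeated nodes), no
noncollider on it is in `C` and every collider on it is in `An(C)`. -/
def Walk.MConn {G : DMG V} (C : Set V) : ∀ {a b : V}, Walk G a b → Prop
  | _, _, .nil _ => True
  | _, _, .cons s w =>
      (Walk.cons s w).nodes.Nodup ∧ Walk.openFrom C (G.anSet C) s.headEnd w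

/-- `A` and `B` are m-separated by `C`: there is no m-connecting path between
a node of `A` and a node of `B` given `C`. -/
def mSep (G : DMG V) (A B C : Set V) : Prop :=
  ∀ ⦃a b : V⦄, a ∈ A → b ∈ B →
    (∀ w : Walk G a b, ¬ w.MConn C) ∧ (∀ w : Walk G b a, ¬ w.MConn C)

/-- Auxiliary directed-edge relation of the `B`-history version of `G`. -/
def histDir (G : DMG V) (B : Set V) : (V ⊕ {x : V // x ∈ B}) → (V ⊕ {x : V // x ∈ B}) → Prop
  | .inl u, .inl v => G.dir u v
  | .inl u, .inr v => G.dir u v.1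
  | _, _ => False

/-- Auxiliary bidirected-edge relation of the `B`-history version of `G`. -/
def histBi (G : DMG V) (B : Set V) : (V ⊕ {x : V // x ∈ B}) → (V ⊕ {x : V // x ∈ B}) → Prop
  | .inl u, .inl v => G.bi u v
  | .inl u, .inr v => G.bi u v.1
  | .inr u, .inl v => G.bi u.1 v
  | .inr _, .inr _ => False

/-- The `B`-history version `G(B)` of `G`: node set `V ⊔ Bᵖ`, whose subgraph
on `V` is `G`, with additionally `α ↔ βᵖ` whenever `α ↔ β` in `G` and
`α → βᵖ` whenever `α → β` in `G` (for `α ∈ V`, `β ∈ B`). -/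
def hist (G : DMG V) (B : Set V) : DMG (V ⊕ {x : V // x ∈ B}) where
  dir := G.histDir B
  bi := G.histBi B
  bi_symm x y h := by
    cases x <;> cases y <;>
      simp only [histBi] at h ⊢ <;>
      first
        | exact G.bi_symm _ _ h
        | exact h

end DMG

namespace DMG

variable {V : Type u} {G : DMG V}

namespace Walk

/-- Concatenation of walks. -/
def append : ∀ {a b c : V}, Walk G a b → Walk G b c → Walk G a c
  | _, _, _, .nil _, v => v
  | _, _, _, .cons s u, v => .cons s (u.append v)

lemma edges_append : ∀ {a b c : V} (u : Walk G a b) (v : Walk G b c),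
    (u.append v).edges = u.edges ++ v.edges
  | _, _, _, .nil _, _ => rfl
  | _, _, _, .cons s u, v => by
      simp [append, edges, edges_append u v]

/-- Auxiliary: the head-mark arriving at the end of the walk, where `h` is the
mark arriving at its start (used for the trivial walk). -/
def lastHeadAux : Bool → ∀ {a b : V}, Walk G a b → Bool
  | h, _, _, .nil _ => h
  | _, _, _, .cons s u => lastHeadAux s.headEnd u

lemma lastHead_eq : ∀ {a b c : V} (s : Step G a b) (u : Walk G b c),
    (Walk.cons s u).lastHead = lastHeadAux s.headEnd u
  | _, _, _, _, .nil _ => rfl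
  | _, _, _, s, .cons t u => by
      show (Walk.cons t u).lastHead = _
      rw [lastHead_eq t u]; rfl

lemma lastHeadAux_append : ∀ {a b c : V} (h : Bool) (u : Walk G a b) (v : Walk G b c),
    lastHeadAux h (u.append v) = lastHeadAux (lastHeadAux h u) v
  | _, _, _, _, .nil _, _ => rfl
  | _, _, _, h, .cons s u, v => by
      show lastHeadAux s.headEnd (u.append v) = _
      rw [lastHeadAux_append s.headEnd u v]; rfl

/-- Like `openFrom`, but also imposing the condition at the final node, whose
outgoing edge has mark `h'` at it. -/
def openFrom' (C A : Set V) : ∀ {a b : V}, Bool → Walk G a b → Bool → Prop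
  | a, _, h, .nil _, h' => if h && h' then a ∈ A else a ∉ C
  | a, _, h, .cons s u, h' =>
      (if h && s.headStart then a ∈ A else a ∉ C) ∧ openFrom' C A s.headEnd u h'

lemma openFrom'_iff {C A : Set V} : ∀ {a b : V} (h : Bool) (u : Walk G a b) (h' : Bool),
    openFrom' C A h u h' ↔
      openFrom C A h u ∧ (if lastHeadAux h u && h' then b ∈ A else b ∉ C)
  | _, _, h, .nil _, h' => by simp [openFrom', openFrom, lastHeadAux]
  | _, _, h, .cons s u, h' => by
      simp [openFrom', openFrom, lastHeadAux, openFrom'_iff s.headEnd u h', and_assoc]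

lemma openFrom_append_cons {C A : Set V} :
    ∀ {a b d e : V} (h : Bool) (u : Walk G a b) (s : Step G b d) (v : Walk G d e),
    openFrom C A h (u.append (Walk.cons s v)) ↔
      openFrom' C A h u s.headStart ∧ openFrom C A s.headEnd v
  | _, _, _, _, h, .nil _, s, v => by simp [append, openFrom, openFrom']
  | _, _, _, _, h, .cons r u, s, v => by
      show openFrom C A h (Walk.cons r (u.append (Walk.cons s v))) ↔ _
      simp [openFrom, openFrom', openFrom_append_cons r.headEnd u s v, and_assoc]

/-- The directed-chain lemma: if the walk is open with a head arriving at its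
start, then either its start is in `An(C)`, or the start is an ancestor of the
end and the walk arrives at its end with a head. -/
lemma chain {C : Set V} : ∀ {p q : V} (u : Walk G p q),
    openFrom C (G.anSet C) true u →
    p ∈ G.anSet C ∨ (G.anc p q ∧ lastHeadAux true u = true)
  | _, _, .nil _, _ => Or.inr ⟨Relation.ReflTransGen.refl, rfl⟩
  | p, q, .cons s u, hopen => by
      obtain ⟨h1, h2⟩ := hopen
      cases s with
      | dirF hd =>
          have h2' : openFrom C (G.anSet C) true u := h2
          rcases chain u h2' with hm | ⟨hanc, hlast⟩
          · obtain ⟨c, hc, hmc⟩ := hm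
            exact Or.inl ⟨c, hc, Relation.ReflTransGen.head hd hmc⟩
          · exact Or.inr ⟨Relation.ReflTransGen.head hd hanc,
              by simpa [lastHeadAux, Step.headEnd] using hlast⟩
      | dirB hd =>
          simp [Step.headStart] at h1
          exact Or.inl h1
      | bid hb =>
          simp [Step.headStart] at h1
          exact Or.inl h1

/-- Splicing out a loop at an interior node preserves μ-connection. -/
lemma splice {C : Set V} {a x b : V} (w1 : Walk G a x) (w2 : Walk G x x) (w3 : Walk G x b)
    (h2 : w2.Nontrivial) (h3 : w3.Nontrivial)
    (hmu : (w1.append (w2.append w3)).MuConn C) : (w1.append w3).MuConn C := by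
  cases w2 with
  | nil => exact absurd h2 (by simp [Nontrivial])
  | cons f1 u2 =>
  cases w3 with
  | nil => exact absurd h3 (by simp [Nontrivial])
  | cons t v3 =>
  cases w1 with
  | nil =>
      -- spliced walk is `cons t v3`; whole walk is `cons f1 (u2.append (cons t v3))`
      obtain ⟨hxC, hopen, hlast⟩ := hmu
      rw [openFrom_append_cons] at hopen
      refine ⟨hxC, hopen.2, ?_⟩
      rw [lastHead_eq] at hlast ⊢
      rw [lastHeadAux_append] at hlast
      exact hlast
  | cons s1 u1 =>
      have hmu' : a ∉ C ∧
          openFrom C (G.anSet C) s1.headEnd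
            (u1.append (Walk.cons f1 (u2.append (Walk.cons t v3)))) ∧
          (Walk.cons s1 (u1.append (Walk.cons f1 (u2.append (Walk.cons t v3))))).lastHead
            = true := hmu
      obtain ⟨haC, hopen, hlast⟩ := hmu'
      rw [openFrom_append_cons] at hopen
      obtain ⟨hA, hrest⟩ := hopen
      rw [openFrom_append_cons] at hrest
      obtain ⟨hB, hv3⟩ := hrest
      rw [openFrom'_iff] at hA hB
      obtain ⟨hA1, hA2⟩ := hA
      obtain ⟨hB1, hB2⟩ := hB
      refine ⟨haC, ?_, ?_⟩
      · rw [openFrom_append_cons]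
        refine ⟨?_, hv3⟩
        rw [openFrom'_iff]
        refine ⟨hA1, ?_⟩
        cases ht : t.headStart with
        | false =>
            simpa using (by simpa [ht] using hB2 : x ∉ C)
        | true =>
            cases he : lastHeadAux s1.headEnd u1 with
            | false => simpa using (by simpa [he] using hA2 : x ∉ C)
            | true =>
                simp only [he, ht, Bool.and_self, if_pos]
                cases hf : f1.headStart with
                | true => simpa [he, hf] using hA2
                | false =>
                    cases hf2 : lastHeadAux f1.headEnd u2 with
                    | true => simpa [hf2, ht] using hB2
                    | false =>
                        -- the "bad case": use the chain lemma inside `u2`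
                        cases f1 with
                        | dirF hd =>
                            have hB1' : openFrom C (G.anSet C) true u2 := hB1
                            rcases chain u2 hB1' with hm | ⟨_, hlastu⟩
                            · obtain ⟨c, hc, hmc⟩ := hm
                              exact ⟨c, hc, Relation.ReflTransGen.head hd hmc⟩
                            · simp only [Step.headEnd] at hf2
                              exact absurd hlastu (by simp [hf2])
                        | dirB hd => simp [Step.headStart] at hf
                        | bid hb => simp [Step.headStart] at hf
      · rw [lastHead_eq, lastHeadAux_append] at hlast ⊢
        rw [show lastHeadAux (lastHeadAux s1.headEnd u1) (Walk.cons f1 (u2.append (Walk.cons t v3)))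
              = lastHeadAux (lastHeadAux f1.headEnd u2) (Walk.cons t v3) from by
            show lastHeadAux f1.headEnd (u2.append (Walk.cons t v3)) = _
            rw [lastHeadAux_append]] at hlast
        show lastHeadAux (lastHeadAux s1.headEnd u1) (Walk.cons t v3) = true
        show lastHeadAux t.headEnd v3 = true
        exact hlast

lemma nodes_ne_nil : ∀ {a b : V} (w : Walk G a b), w.nodes ≠ []
  | _, _, .nil _ => by simp [nodes]
  | _, _, .cons _ _ => by simp [nodes]

lemma dropLast_nodes_cons {a m b : V} (s : Step G a m) (w : Walk G m b) :
    (Walk.cons s w).nodes.dropLast = a :: w.nodes.dropLast := by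
  cases w <;> simp [nodes]

lemma nodes_eq_dropLast : ∀ {a b : V} (w : Walk G a b),
    w.nodes = w.nodes.dropLast ++ [b]
  | _, _, .nil _ => rfl
  | _, _, .cons s w => by
      rw [dropLast_nodes_cons]
      exact congrArg (List.cons _) (nodes_eq_dropLast w)

lemma splitAt : ∀ {p b : V} (w : Walk G p b) (x : V), x ∈ w.nodes.dropLast →
    ∃ (u : Walk G p x) (v : Walk G x b), w = u.append v ∧ v.Nontrivial
  | _, _, .nil _, x, hx => by simp [nodes] at hx
  | p, b, .cons s w', x, hx => by
      rw [dropLast_nodes_cons] at hx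
      rcases List.mem_cons.mp hx with h | h
      · subst h
        exact ⟨Walk.nil x, Walk.cons s w', rfl, by simp [Nontrivial]⟩
      · obtain ⟨u, v, heq, hv⟩ := splitAt w' x h
        exact ⟨Walk.cons s u, v, by rw [heq]; rfl, hv⟩

lemma decomp : ∀ {a b : V} (w : Walk G a b), ¬ w.nodes.dropLast.Nodup →
    ∃ (x : V) (w1 : Walk G a x) (w2 : Walk G x x) (w3 : Walk G x b),
      w = w1.append (w2.append w3) ∧ w2.Nontrivial ∧ w3.Nontrivial
  | _, _, .nil _, hn => absurd (by simp [nodes]) hn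
  | a, b, .cons s w', hn => by
      rw [dropLast_nodes_cons, List.nodup_cons] at hn
      push_neg at hn
      by_cases hmem : a ∈ w'.nodes.dropLast
      · obtain ⟨u, v, heq, hv⟩ := splitAt w' a hmem
        exact ⟨a, Walk.nil a, Walk.cons s u, v, by rw [heq]; rfl,
          by simp [Nontrivial], hv⟩
      · obtain ⟨x, w1, w2, w3, heq, h2, h3⟩ := decomp w' (hn hmem)
        exact ⟨x, Walk.cons s w1, w2, w3, by rw [heq]; rfl, h2, h3⟩

lemma toRoute {C : Set V} : ∀ (n : ℕ) {a b : V} (w : Walk G a b),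
    w.edges.length ≤ n → w.MuConn C →
    ∃ r : Walk G a b, r.MuConn C ∧ (∀ e ∈ r.edges, e ∈ w.edges) ∧
      r.nodes.dropLast.Nodup := by
  intro n
  induction n with
  | zero =>
      intro a b w hlen hmu
      by_cases hnd : w.nodes.dropLast.Nodup
      · exact ⟨w, hmu, fun e he => he, hnd⟩
      · obtain ⟨x, w1, w2, w3, heq, h2, h3⟩ := decomp w hnd
        exfalso
        cases w2 with
        | nil => exact absurd h2 (by simp [Nontrivial])
        | cons f u =>
            have : w.edges.length ≠ 0 := by
              rw [heq, edges_append, edges_append]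
              simp [edges]
            omega
  | succ n ih =>
      intro a b w hlen hmu
      by_cases hnd : w.nodes.dropLast.Nodup
      · exact ⟨w, hmu, fun e he => he, hnd⟩
      · obtain ⟨x, w1, w2, w3, heq, h2, h3⟩ := decomp w hnd
        have hmu' : (w1.append w3).MuConn C := splice w1 w2 w3 h2 h3 (heq ▸ hmu)
        have hlen' : (w1.append w3).edges.length ≤ n := by
          have h2len : 1 ≤ w2.edges.length := by
            cases w2 with
            | nil => exact absurd h2 (by simp [Nontrivial])
            | cons f u => simp [edges]
          have : w.edges.length = w1.edges.length + (w2.edges.length + w3.edges.length) := by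
            rw [heq, edges_append, edges_append]; simp
          rw [edges_append]
          simp only [List.length_append]
          omega
        obtain ⟨r, hr1, hr2, hr3⟩ := ih (w1.append w3) hlen' hmu'
        refine ⟨r, hr1, fun e he => ?_, hr3⟩
        have := hr2 e he
        rw [edges_append] at this
        rw [heq, edges_append, edges_append]
        rcases List.mem_append.mp this with h | h
        · exact List.mem_append.mpr (Or.inl h)
        · exact List.mem_append.mpr (Or.inr (List.mem_append.mpr (Or.inr h)))

end Walk

end DMG

/-- Proposition 2: if `w` is a μ-connecting walk from `a` to
`b` given `C`, then there is a μ-connecting route from `a` to `b` given `C`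
consisting of edges of `w` (a route: no node other than `b` occurs more than
once, and `b` occurs at most twice). -/
theorem stmt1 {V : Type u} [Fintype V] [DecidableEq V] (G : DMG V) (a b : V)
    (C : Set V) (w : DMG.Walk G a b) (hw : w.MuConn C) :
    ∃ r : DMG.Walk G a b, r.MuConn C ∧
      (∀ e ∈ r.edges, e ∈ w.edges) ∧
      (∀ x : V, x ≠ b → r.nodes.count x ≤ 1) ∧
      r.nodes.count b ≤ 2 := by
  obtain ⟨r, hr1, hr2, hr3⟩ := DMG.Walk.toRoute w.edges.length w le_rfl hw
  refine ⟨r, hr1, hr2, ?_, ?_⟩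
  · intro x hx
    have hcount := List.nodup_iff_count_le_one.mp hr3 x
    have hrn := DMG.Walk.nodes_eq_dropLast r
    rw [hrn, List.count_append]
    simpa [List.count_singleton, hx, hx.symm] using hcount
  · have hcount := List.nodup_iff_count_le_one.mp hr3 b
    have hrn := DMG.Walk.nodes_eq_dropLast r
    rw [hrn, List.count_append]
    have : List.count b [b] ≤ 1 := by simp
    omega
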